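/- Let B = colim_i B_i be a filtered colimit of commutative rings along flat transition maps, and let φ : B → C be a ring homomorphism such that each composite B_i → B → C is flat. Then each structural map B_i → B is flat, and φ is flat. -/

import Mathlib

universe u v

/-- Ring equivalences are flat ring homomorphisms. -/
lemma ringEquiv_flat {R : Type u} {S : Type v} [CommRing R] [CommRing S] (e : R ≃+* S) :
    e.toRingHom.Flat := by
  letI : Algebra R S := e.toRingHom.toAlgebra
  change Module.Flat R S
  have smul_def : ∀ (r : R) (s : S), r • s = e r * s := fun r s => by
    rw [Algebra.smul_def, RingHom.algebraMap_toAlgebra]; rfl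
  exact Module.Flat.of_linearEquiv (M := R) (R := R) (N := S)
    { toFun := e.symm
      map_add' := by simp
      map_smul' := fun r s => by simp [smul_def, smul_eq_mul]
      invFun := e
      left_inv := e.apply_symm_apply
      right_inv := e.symm_apply_apply }

/-- Universe-polymorphic equational criterion for flatness of a ring map, `Fin`-indexed. -/
def FinFlatCrit {R : Type*} {S : Type*} [CommRing R] [CommRing S] (φ : R →+* S) : Prop :=
  ∀ (n : ℕ) (b : Fin n → R) (x : Fin n → S), ∑ k, φ (b k) * x k = 0 →
    ∃ (m : ℕ) (a : Fin n → Fin m → R) (y : Fin m → S),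
      (∀ k, x k = ∑ j, φ (a k j) * y j) ∧ ∀ j, ∑ k, b k * a k j = 0

lemma flat_iff_finFlatCrit_aux {R S : Type u} [CommRing R] [CommRing S] (φ : R →+* S) :
    φ.Flat ↔ FinFlatCrit φ := by
  letI : Algebra R S := φ.toAlgebra
  have smul_def : ∀ (r : R) (s : S), r • s = φ r * s := fun r s => by
    rw [Algebra.smul_def, RingHom.algebraMap_toAlgebra]
  constructor
  · intro h n b x hrel
    haveI : Module.Flat R S := h
    have hrel' : ∑ k : ULift.{u} (Fin n), b k.down • x k.down = 0 := by
      rw [← Equiv.sum_comp (Equiv.ulift.symm : Fin n ≃ ULift.{u} (Fin n))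
        (fun k : ULift.{u} (Fin n) => b k.down • x k.down)]
      simpa [smul_def] using hrel
    obtain ⟨κ, a, y, h1, h2⟩ := Module.Flat.isTrivialRelation_of_sum_smul_eq_zero
      (f := fun k : ULift.{u} (Fin n) => b k.down) (x := fun k => x k.down) hrel'
    let e := Fintype.equivFin (Fin κ)
    refine ⟨Fintype.card (Fin κ), fun k j => a ⟨k⟩ (e.symm j), fun j => y (e.symm j),
      fun k => ?_, fun j => ?_⟩
    · rw [← Equiv.sum_comp e (fun j => φ (a ⟨k⟩ (e.symm j)) * y (e.symm j))]
      simpa [smul_def] using h1 ⟨k⟩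
    · show ∑ k : Fin n, b k * a ⟨k⟩ (e.symm j) = 0
      rw [← Equiv.sum_comp (Equiv.ulift : ULift.{u} (Fin n) ≃ Fin n)
        (fun k => b k * a ⟨k⟩ (e.symm j))]
      simpa using h2 (e.symm j)
  · intro H
    change Module.Flat R S
    apply Module.Flat.of_forall_isTrivialRelation
    intro l fc x hrel
    have hrel' : ∑ k, φ (fc k) * x k = 0 := by
      simpa [smul_def] using hrel
    obtain ⟨m, a, y, h1, h2⟩ := H _ _ _ hrel'
    refine ⟨m, a, y, fun i => ?_, h2⟩
    simpa [smul_def] using h1 i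

lemma finFlatCrit_conj {R S R' S' : Type*} [CommRing R] [CommRing S] [CommRing R'] [CommRing S']
    (φ : R →+* S) (e : R' ≃+* R) (e' : S' ≃+* S) (h : FinFlatCrit φ) :
    FinFlatCrit ((e'.symm.toRingHom.comp φ).comp e.toRingHom) := by
  intro n b x hrel
  have hrel' : ∑ k, φ (e (b k)) * e' (x k) = 0 := by
    have := congrArg e' hrel
    simpa [map_sum] using this
  obtain ⟨m, a, y, h1, h2⟩ := h n (fun k => e (b k)) (fun k => e' (x k)) hrel'
  refine ⟨m, fun k j => e.symm (a k j), fun j => e'.symm (y j), fun k => ?_, fun j => ?_⟩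
  · apply e'.injective
    simpa [map_sum] using h1 k
  · apply e.injective
    simpa [map_sum] using h2 j

lemma flat_iff_finFlatCrit {R : Type u} {S : Type v} [CommRing R] [CommRing S] (φ : R →+* S) :
    φ.Flat ↔ FinFlatCrit φ := by
  let eR : ULift.{v} R ≃+* R := ULift.ringEquiv
  let eS : ULift.{u} S ≃+* S := ULift.ringEquiv
  let ψ := (eS.symm.toRingHom.comp φ).comp eR.toRingHom
  have hφψ : φ = (eS.toRingHom.comp ψ).comp eR.symm.toRingHom := by
    ext r; simp [ψ, eR, eS]
  constructor
  · intro h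
    have hψflat : ψ.Flat := by
      haveI := h; haveI := ringEquiv_flat eS.symm; haveI := ringEquiv_flat eR
      exact RingHom.Flat.comp this (RingHom.Flat.comp h ‹eS.symm.toRingHom.Flat›)
    have hψ : FinFlatCrit ψ := (flat_iff_finFlatCrit_aux ψ).mp hψflat
    have := finFlatCrit_conj ψ eR.symm eS.symm hψ
    rwa [RingEquiv.symm_symm, ← hφψ] at this
  · intro h
    have hψ : FinFlatCrit ψ := finFlatCrit_conj φ eR eS h
    haveI : ψ.Flat := (flat_iff_finFlatCrit_aux ψ).mpr hψ
    rw [hφψ]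
    haveI := ringEquiv_flat eS; haveI := ringEquiv_flat eR.symm
    exact RingHom.Flat.comp this (RingHom.Flat.comp ‹ψ.Flat› ‹eS.toRingHom.Flat›)


/-- Let `B = colim_i B_i` be a filtered colimit of commutative rings along flat transition
maps (presented concretely: `B` together with compatible maps `g i : B i →+* B` such that
every element of `B` comes from some `B i` and every element killed by `g i` is killed by
some transition map).  Let `φ : B →+* C` be a ring homomorphism such that each composite
`B_i → B → C` is flat.  Then each structural map `B_i → B` is flat, and `φ` is flat. -/
theorem flatness_of_filtered_colimit
    {ι : Type*} [Preorder ι] [IsDirected ι (· ≤ ·)] [Nonempty ι]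
    (B : ι → Type*) [∀ i, CommRing (B i)]
    (f : ∀ i j, i ≤ j → (B i →+* B j))
    (hf_id : ∀ i (x : B i), f i i le_rfl x = x)
    (hf_comp : ∀ i j k (hij : i ≤ j) (hjk : j ≤ k) (x : B i),
      f j k hjk (f i j hij x) = f i k (hij.trans hjk) x)
    (hf_flat : ∀ i j (hij : i ≤ j), (f i j hij).Flat)
    (Bc : Type*) [CommRing Bc] (g : ∀ i, B i →+* Bc)
    (hg_comp : ∀ i j (hij : i ≤ j) (x : B i), g j (f i j hij x) = g i x)
    (hg_jointly_surj : ∀ b : Bc, ∃ i, ∃ x : B i, g i x = b)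
    (hg_eventually_inj : ∀ i (x : B i), g i x = 0 → ∃ j, ∃ hij : i ≤ j, f i j hij x = 0)
    (C : Type*) [CommRing C] (φ : Bc →+* C)
    (hφ : ∀ i, ((φ.comp (g i)).Flat)) :
    (∀ i, (g i).Flat) ∧ φ.Flat := by
  classical
  have lift : ∀ (n : ℕ) (b : Fin n → Bc), ∃ (i : ι) (z : Fin n → B i), ∀ k, g i (z k) = b k := by
    intro n b
    choose idx z hz using fun k => hg_jointly_surj (b k)
    obtain ⟨i, hi⟩ := (Finset.univ.image idx).exists_le
    exact ⟨i, fun k => f (idx k) i (hi _ (Finset.mem_image_of_mem idx (Finset.mem_univ k))) (z k),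
      fun k => by rw [hg_comp, hz]⟩
  have h1 : ∀ i, (g i).Flat := by
    intro i
    rw [flat_iff_finFlatCrit]
    intro n b x hrel
    obtain ⟨j0, z, hz⟩ := lift n x
    obtain ⟨j, hij, hj0j⟩ := directed_of (· ≤ ·) i j0
    set w : Fin n → B j := fun k => f j0 j hj0j (z k) with hw
    have hgw : ∀ k, g j (w k) = x k := fun k => (hg_comp j0 j hj0j (z k)).trans (hz k)
    have hzero : g j (∑ k, f i j hij (b k) * w k) = 0 := by
      rw [map_sum]
      simp only [map_mul, hg_comp, hz, hgw]
      exact hrel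
    obtain ⟨j', hjj', hker⟩ := hg_eventually_inj j _ hzero
    have hrel' : ∑ k, f i j' (hij.trans hjj') (b k) * f j j' hjj' (w k) = 0 := by
      have h0 : f j j' hjj' (∑ k, f i j hij (b k) * w k) = 0 := by rw [hker]
      rw [map_sum] at h0
      simpa [map_mul, hf_comp] using h0
    obtain ⟨m, a, y, hy1, hy2⟩ := (flat_iff_finFlatCrit (f i j' (hij.trans hjj'))).mp
      (hf_flat i j' _) n b (fun k => f j j' hjj' (w k)) hrel'
    refine ⟨m, a, fun q => g j' (y q), fun k => ?_, hy2⟩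
    have hx : g j' (f j j' hjj' (w k)) = x k := by rw [hg_comp]; exact hgw k
    rw [← hx, hy1 k, map_sum]
    simp [hg_comp]
  refine ⟨h1, ?_⟩
  rw [flat_iff_finFlatCrit]
  intro n b x hrel
  obtain ⟨i, b', hb'⟩ := lift n b
  have hrel' : ∑ k, (φ.comp (g i)) (b' k) * x k = 0 := by
    simpa [RingHom.comp_apply, hb'] using hrel
  obtain ⟨m, a, y, hy1, hy2⟩ := (flat_iff_finFlatCrit (φ.comp (g i))).mp (hφ i) n b' x hrel'
  refine ⟨m, fun k q => g i (a k q), y, fun k => ?_, fun q => ?_⟩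
  · simpa [RingHom.comp_apply] using hy1 k
  · have h0 : g i (∑ k, b' k * a k q) = 0 := by rw [hy2 q, map_zero]
    rw [map_sum] at h0
    simpa [map_mul, hb'] using h0
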